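/- arXiv:1012.5214 — 2 statements merged into one kernel-verified Lean document; each statement's English description precedes it below -/
import Mathlib

section
/- Let G be a locally compact Hausdorff group, H a closed subgroup, and Y a locally compact Hausdorff H-space. Then the induced G-space G×_H Y is a proper G-space if and only if Y is a proper H-space. -/
/-- A continuous action of `G` on `X` is *proper* if the map
`G × X → X × X, (g,x) ↦ (g • x, x)` is proper, i.e. preimages of compact sets
are compact. -/
def ProperAction (G X : Type*) [SMul G X] [TopologicalSpace G]
    [TopologicalSpace X] : Prop :=
  ∀ K : Set (X × X), IsCompact K →
    IsCompact ((fun p : G × X => (p.1 • p.2, p.2)) ⁻¹' K)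

/-- The setoid on `G × Y` whose quotient is the induced space `G ×_H Y`:
`(g, y) ∼ (g * h⁻¹, h • y)` for `h ∈ H`. -/
def indSetoid (G : Type*) [Group G] (H : Subgroup G) (Y : Type*)
    [MulAction (↥H) Y] : Setoid (G × Y) where
  r p q := ∃ h : ↥H, q.1 = p.1 * (h : G)⁻¹ ∧ q.2 = h • p.2
  iseqv := by
    constructor
    · intro p
      exact ⟨1, by simp, by simp⟩
    · rintro p q ⟨h, h1, h2⟩
      refine ⟨h⁻¹, by simp [h1], by simp [h2]⟩
    · rintro p q r ⟨h, h1, h2⟩ ⟨k, k1, k2⟩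
      refine ⟨k * h, by simp [k1, h1, mul_assoc], by simp [k2, h2, mul_smul]⟩

/-- The induced `G`-space `G ×_H Y`, i.e. the quotient of `G × Y` by the
`H`-action `h • (g, y) = (g h⁻¹, h • y)`, endowed with the quotient topology
and with `G` acting by left translation on the first coordinate. -/
abbrev IndSpace (G : Type*) [Group G] [TopologicalSpace G] (H : Subgroup G)
    (Y : Type*) [TopologicalSpace Y] [MulAction (↥H) Y] : Type _ :=
  Quotient (indSetoid G H Y)

/-- `G` acts on `G ×_H Y` by left translation in the first coordinate. -/
instance IndSpace.instMulAction (G : Type*) [Group G] [TopologicalSpace G]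
    (H : Subgroup G) (Y : Type*) [TopologicalSpace Y] [MulAction (↥H) Y] :
    MulAction G (IndSpace G H Y) where
  smul g q := Quotient.liftOn q
    (fun p => Quotient.mk (indSetoid G H Y) (g * p.1, p.2))
    (by
      rintro p q ⟨h, h1, h2⟩
      exact Quotient.sound ⟨h, by rw [h1, mul_assoc], h2⟩)
  one_smul q := by
    refine Quotient.inductionOn q ?_
    intro p
    show Quotient.mk (indSetoid G H Y) (1 * p.1, p.2) = Quotient.mk _ p
    rw [one_mul]
  mul_smul g g' q := by
    refine Quotient.inductionOn q ?_
    intro p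
    show Quotient.mk (indSetoid G H Y) (g * g' * p.1, p.2)
      = Quotient.mk (indSetoid G H Y) (g * (g' * p.1), p.2)
    rw [mul_assoc]

open Topology Set Function

section Aux

variable {G : Type*} [Group G] [TopologicalSpace G] [IsTopologicalGroup G]
  {H : Subgroup G} {Y : Type*} [TopologicalSpace Y]
  [MulAction (↥H) Y] [ContinuousSMul (↥H) Y]

namespace IndAux

/-- The quotient map. -/
noncomputable abbrev qk (G : Type*) [Group G] [TopologicalSpace G] (H : Subgroup G)
    (Y : Type*) [TopologicalSpace Y] [MulAction (↥H) Y] :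
    G × Y → IndSpace G H Y := Quotient.mk (indSetoid G H Y)

theorem isQuotientMap_qk : IsQuotientMap (qk G H Y) := isQuotientMap_quot_mk

theorem qk_eq {p p' : G × Y} : qk G H Y p = qk G H Y p' ↔
    ∃ h : ↥H, p'.1 = p.1 * (h : G)⁻¹ ∧ p'.2 = h • p.2 :=
  ⟨fun e => Quotient.exact e, fun h => Quotient.sound h⟩

/-- The homeomorphism of `G × Y` given by `h ∈ H`. -/
def σ (h : ↥H) : (G × Y) ≃ₜ (G × Y) :=
  (Homeomorph.mulRight ((h : G)⁻¹)).prodCongr (Homeomorph.smul h)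

theorem preimage_image_qk (U : Set (G × Y)) :
    qk G H Y ⁻¹' (qk G H Y '' U) = ⋃ h : ↥H, σ h '' U := by
  ext x
  simp only [mem_preimage, mem_image, mem_iUnion]
  constructor
  · rintro ⟨p, hp, hq⟩
    obtain ⟨h, h1, h2⟩ := qk_eq.mp hq
    exact ⟨h, p, hp, by simp [σ, Prod.ext_iff, h1.symm, h2.symm]⟩
  · rintro ⟨h, p, hp, rfl⟩
    refine ⟨p, hp, Quotient.sound ⟨h, rfl, rfl⟩⟩

theorem isOpenMap_qk : IsOpenMap (qk G H Y) := by
  intro U hU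
  rw [← isQuotientMap_qk.isOpen_preimage, preimage_image_qk]
  exact isOpen_iUnion fun h => (σ h).isOpenMap U hU

/-- The set where two points of `G × Y` are related. -/
def A (G : Type*) [Group G] (H : Subgroup G) (Y : Type*) : Set ((G × Y) × (G × Y)) :=
  {x | x.2.1⁻¹ * x.1.1 ∈ H}

theorem t2_indSpace [T2Space G] [T2Space Y] (hH : IsClosed (H : Set G)) :
    T2Space (IndSpace G H Y) := by
  rw [t2_iff_isClosed_diagonal]
  have hqq : IsQuotientMap (Prod.map (qk G H Y) (qk G H Y)) :=
    (isOpenMap_qk.prodMap isOpenMap_qk).isQuotientMap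
      (isQuotientMap_qk.continuous.prodMap isQuotientMap_qk.continuous)
      (isQuotientMap_qk.surjective.prodMap isQuotientMap_qk.surjective)
  rw [← hqq.isClosed_preimage]
  have hA : IsClosed (A G H Y) :=
    hH.preimage ((continuous_fst.comp continuous_snd).inv.mul
      (continuous_fst.comp continuous_fst))
  have hS : IsClosed {a : A G H Y |
      (⟨a.1.2.1⁻¹ * a.1.1.1, a.2⟩ : ↥H) • a.1.1.2 = a.1.2.2} := by
    refine isClosed_eq (Continuous.smul ?_ ?_) ?_
    · exact Continuous.subtype_mk
        (((continuous_fst.comp continuous_snd).comp continuous_subtype_val).inv.mul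
          ((continuous_fst.comp continuous_fst).comp continuous_subtype_val))
        (fun a => a.2)
    · exact (continuous_snd.comp continuous_fst).comp continuous_subtype_val
    · exact (continuous_snd.comp continuous_snd).comp continuous_subtype_val
  have key : Prod.map (qk G H Y) (qk G H Y) ⁻¹' (Set.diagonal (IndSpace G H Y))
      = Subtype.val '' {a : A G H Y |
        (⟨a.1.2.1⁻¹ * a.1.1.1, a.2⟩ : ↥H) • a.1.1.2 = a.1.2.2} := by
    ext x
    simp only [mem_preimage, Prod.map_apply, mem_diagonal_iff, mem_image]
    constructor
    · intro hx
      obtain ⟨h, h1, h2⟩ := qk_eq.mp hx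
      have hval : x.2.1⁻¹ * x.1.1 = (h : G) := by rw [h1]; group
      have hm : x.2.1⁻¹ * x.1.1 ∈ H := hval ▸ h.2
      refine ⟨⟨x, hm⟩, ?_, rfl⟩
      have heq : (⟨x.2.1⁻¹ * x.1.1, hm⟩ : ↥H) = h := Subtype.ext hval
      simp only [mem_setOf_eq, heq]
      exact h2.symm
    · rintro ⟨⟨x, hm⟩, ha, rfl⟩
      exact qk_eq.mpr ⟨⟨x.2.1⁻¹ * x.1.1, hm⟩, by group, ha.symm⟩
  rw [key]
  exact ((hA.isClosedEmbedding_subtypeVal).isClosedMap _ hS)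

end IndAux
end Aux

section More
variable {G : Type*} [Group G] [TopologicalSpace G] [IsTopologicalGroup G]
  {H : Subgroup G} {Y : Type*} [TopologicalSpace Y]
  [MulAction (↥H) Y] [ContinuousSMul (↥H) Y]

namespace IndAux

theorem smul_qk (g : G) (p : G × Y) : g • qk G H Y p = qk G H Y (g * p.1, p.2) := rfl

theorem continuous_smul_ind :
    Continuous (fun x : G × IndSpace G H Y => x.1 • x.2) := by
  have hq2 : IsQuotientMap (Prod.map (id : G → G) (qk G H Y)) :=
    (IsOpenMap.id.prodMap isOpenMap_qk).isQuotientMap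
      (continuous_id.prodMap isQuotientMap_qk.continuous)
      (Function.surjective_id.prodMap isQuotientMap_qk.surjective)
  rw [hq2.continuous_iff]
  show Continuous (fun x : G × (G × Y) => qk G H Y (x.1 * x.2.1, x.2.2))
  exact isQuotientMap_qk.continuous.comp
    ((continuous_fst.mul (continuous_fst.comp continuous_snd)).prodMk
      (continuous_snd.comp continuous_snd))

/-- The embedding `Y → G ×_H Y`, `y ↦ [(1, y)]`. -/
noncomputable def emb (G : Type*) [Group G] [TopologicalSpace G] (H : Subgroup G)
    (Y : Type*) [TopologicalSpace Y] [MulAction (↥H) Y] (y : Y) :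
    IndSpace G H Y := qk G H Y (1, y)

theorem continuous_emb : Continuous (emb G H Y) :=
  isQuotientMap_qk.continuous.comp (continuous_const.prodMk continuous_id)

theorem emb_injective : Function.Injective (emb G H Y) := by
  intro y y' e
  obtain ⟨h, h1, h2⟩ := qk_eq.mp e
  have hinv : ((h : G))⁻¹ = 1 := by simpa using h1.symm
  have hh : h = 1 := Subtype.ext (inv_eq_one.mp hinv)
  have h2' : y' = h • y := h2
  rw [h2', hh, one_smul]

theorem emb_closedEmbedding (hH : IsClosed (H : Set G)) :
    Topology.IsClosedEmbedding (emb G H Y) := by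
  refine Topology.IsClosedEmbedding.of_continuous_injective_isClosedMap
    continuous_emb emb_injective ?_
  intro F hF
  rw [← isQuotientMap_qk.isClosed_preimage]
  have key : qk G H Y ⁻¹' (emb G H Y '' F)
      = (Prod.map (Subtype.val : ↥H → G) (id : Y → Y)) ''
        {p : ↥H × Y | p.1 • p.2 ∈ F} := by
    ext ⟨g, y⟩
    simp only [mem_preimage, mem_image, mem_setOf_eq, Prod.map_apply, Prod.ext_iff]
    constructor
    · rintro ⟨f, hf, hq⟩
      obtain ⟨h, h1, h2⟩ := qk_eq.mp hq
      have hg : g = (h : G)⁻¹ := by simpa using h1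
      refine ⟨(h⁻¹, y), ?_, hg.symm, rfl⟩
      show h⁻¹ • y ∈ F
      have h2' : y = h • f := h2
      rw [h2', inv_smul_smul]; exact hf
    · rintro ⟨⟨h, y'⟩, hm, rfl, rfl⟩
      exact ⟨h • y', hm, Quotient.sound ⟨h⁻¹, by simp, by simp⟩⟩
  rw [key]
  exact ((hH.isClosedEmbedding_subtypeVal.isProperMap.prodMap
    isProperMap_id).isClosedMap) _ (hF.preimage continuous_smul)

theorem smul_emb (h : ↥H) (y : Y) : (h : G) • emb G H Y y = emb G H Y (h • y) := by
  rw [emb, smul_qk]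
  exact Quotient.sound ⟨h, by simp, rfl⟩

end IndAux
end More

/-- Compact sets lift along open continuous surjections from weakly locally
compact spaces. -/
theorem exists_compact_cover' {X Z : Type*} [TopologicalSpace X] [TopologicalSpace Z]
    [WeaklyLocallyCompactSpace X] {f : X → Z} (hc : Continuous f) (ho : IsOpenMap f)
    (hs : Function.Surjective f) {K : Set Z} (hK : IsCompact K) :
    ∃ L : Set X, IsCompact L ∧ K ⊆ f '' L := by
  choose x hx using hs
  choose N hNc hNx using fun z : Z => exists_compact_mem_nhds (x z)
  have hU : ∀ z ∈ K, f '' N z ∈ 𝓝 z := by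
    intro z _
    have := ho.image_mem_nhds (hNx z)
    rwa [hx z] at this
  obtain ⟨t, -, ht⟩ := hK.elim_nhds_subcover (fun z => f '' N z) hU
  refine ⟨⋃ z ∈ t, N z, t.finite_toSet.isCompact_biUnion (fun z _ => hNc z), ?_⟩
  rw [image_iUnion₂]
  exact ht


/-- Let `G` be a locally compact Hausdorff group, `H` a closed subgroup, and
`Y` a locally compact Hausdorff `H`-space.  Then the induced `G`-space
`G ×_H Y` is a proper `G`-space if and only if `Y` is a proper `H`-space. -/
theorem indSpace_properAction_iff
    (G : Type*) [Group G] [TopologicalSpace G] [IsTopologicalGroup G]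
    [LocallyCompactSpace G] [T2Space G]
    (H : Subgroup G) (hH : IsClosed (H : Set G))
    (Y : Type*) [TopologicalSpace Y] [LocallyCompactSpace Y] [T2Space Y]
    [MulAction (↥H) Y] [ContinuousSMul (↥H) Y] :
    ProperAction G (IndSpace G H Y) ↔ ProperAction (↥H) Y := by
  classical
  constructor
  · -- proper induced action implies proper H-action on Y
    intro hP K hK
    have icont : Continuous (IndAux.emb G H Y) := IndAux.continuous_emb
    have iemb := IndAux.emb_closedEmbedding (G := G) (H := H) (Y := Y) hH
    have hC : IsCompact ((fun p : G × IndSpace G H Y => (p.1 • p.2, p.2)) ⁻¹'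
        ((Prod.map (IndAux.emb G H Y) (IndAux.emb G H Y)) '' K)) :=
      hP _ (hK.image (icont.prodMap icont))
    have hjp : IsProperMap
        (Prod.map (Subtype.val : ↥H → G) (IndAux.emb G H Y)) :=
      (hH.isClosedEmbedding_subtypeVal.isProperMap).prodMap iemb.isProperMap
    have key : (fun p : ↥H × Y => (p.1 • p.2, p.2)) ⁻¹' K
        = (Prod.map (Subtype.val : ↥H → G) (IndAux.emb G H Y)) ⁻¹'
          ((fun p : G × IndSpace G H Y => (p.1 • p.2, p.2)) ⁻¹'
            ((Prod.map (IndAux.emb G H Y) (IndAux.emb G H Y)) '' K)) := by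
      ext ⟨h, y⟩
      simp only [Set.mem_preimage, Prod.map_apply, Set.mem_image, Prod.mk.injEq,
        Prod.ext_iff]
      constructor
      · intro hm
        exact ⟨(h • y, y), hm, (IndAux.smul_emb h y).symm, rfl⟩
      · rintro ⟨x, hx, e1, e2⟩
        have e1' : IndAux.emb G H Y x.1 = (h : G) • IndAux.emb G H Y y := e1
        have e2' : IndAux.emb G H Y x.2 = IndAux.emb G H Y y := e2
        rw [IndAux.smul_emb] at e1'
        have h1 : x.1 = h • y := IndAux.emb_injective e1'
        have h2 : x.2 = y := IndAux.emb_injective e2'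
        rwa [← h1, ← h2]
    rw [key]
    exact hjp.isCompact_preimage hC
  · -- proper H-action on Y implies proper induced action
    intro hP K hK
    haveI : T2Space (IndSpace G H Y) := IndAux.t2_indSpace hH
    obtain ⟨L, hL, hLK⟩ := exists_compact_cover'
      (IndAux.isQuotientMap_qk (G := G) (H := H) (Y := Y)).continuous
      IndAux.isOpenMap_qk IndAux.isQuotientMap_qk.surjective
      ((hK.image continuous_fst).union (hK.image continuous_snd))
    set L1 : Set G := Prod.fst '' L with hL1def
    set L2 : Set Y := Prod.snd '' L with hL2def
    have hL1 : IsCompact L1 := hL.image continuous_fst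
    have hL2 : IsCompact L2 := hL.image continuous_snd
    set C0 : Set (↥H × Y) := (fun p : ↥H × Y => (p.1 • p.2, p.2)) ⁻¹' (L2 ×ˢ L2)
      with hC0def
    have hC0 : IsCompact C0 := hP _ (hL2.prod hL2)
    set CH : Set G := Subtype.val '' (Prod.fst '' C0) with hCHdef
    have hCH : IsCompact CH := (hC0.image continuous_fst).image continuous_subtype_val
    set M : Set G := (fun x : G × G × G => x.1 * x.2.1⁻¹ * x.2.2⁻¹) ''
      (L1 ×ˢ (CH ×ˢ L1)) with hMdef
    have hM : IsCompact M := (hL1.prod (hCH.prod hL1)).image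
      ((continuous_fst.mul ((continuous_fst.comp continuous_snd).inv)).mul
        ((continuous_snd.comp continuous_snd).inv))
    have hPc : IsClosed ((fun p : G × IndSpace G H Y => (p.1 • p.2, p.2)) ⁻¹' K) :=
      hK.isClosed.preimage (IndAux.continuous_smul_ind.prodMk continuous_snd)
    refine IsCompact.of_isClosed_subset (hM.prod (hK.image continuous_snd)) hPc ?_
    rintro ⟨g, z⟩ hgz
    have hgz' : (g • z, z) ∈ K := hgz
    have hzK : z ∈ Prod.snd '' K := ⟨_, hgz', rfl⟩
    have hgzK : g • z ∈ Prod.fst '' K := ⟨_, hgz', rfl⟩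
    obtain ⟨⟨a, y⟩, haL, hqa⟩ := hLK (Or.inr hzK)
    obtain ⟨⟨b, y'⟩, hbL, hqb⟩ := hLK (Or.inl hgzK)
    have heq : IndAux.qk G H Y (b, y') = IndAux.qk G H Y (g * a, y) := by
      rw [hqb, ← hqa, IndAux.smul_qk]
    obtain ⟨h, h1, h2⟩ := IndAux.qk_eq.mp heq
    have h1' : g * a = b * (h : G)⁻¹ := h1
    have h2' : y = h • y' := h2
    refine ⟨?_, hzK⟩
    have hyL2 : y ∈ L2 := ⟨(a, y), haL, rfl⟩
    have hy'L2 : y' ∈ L2 := ⟨(b, y'), hbL, rfl⟩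
    have hhC0 : (h, y') ∈ C0 := by
      have hmem : (h • y', y') ∈ L2 ×ˢ L2 := ⟨h2' ▸ hyL2, hy'L2⟩
      exact hmem
    refine ⟨(b, ((h : G), a)), ⟨⟨(b, y'), hbL, rfl⟩, ⟨⟨h, ⟨(h, y'), hhC0, rfl⟩, rfl⟩,
      ⟨(a, y), haL, rfl⟩⟩⟩, ?_⟩
    show b * (h : G)⁻¹ * a⁻¹ = g
    rw [← h1', mul_inv_cancel_right]
end

section
/- Let G be a locally compact Hausdorff group, H a closed subgroup, Y a locally compact Hausdorff proper H-space, and β a strongly continuous action of G by *-automorphisms on a C*-algebra B. Then the map Φ: C₀((G×_H Y)×_G B) → C₀(Y×_H B) defined by Φ(F)(y) = F([e,y]) is a *-isomorphism, with inverse given by Φ⁻¹(F)([g,y]) = β_g(F(y)). -/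
/-- The generalized fixed-point algebra `C₀(X ×_Γ B)`:  bounded continuous
functions `F : X → B` with `F (g • x) = g • F x`, such that the induced
function `‖F(·)‖` on the orbit space vanishes at infinity. -/
def IndAlg (Γ X B : Type*) [Group Γ] [TopologicalSpace X] [MulAction Γ X]
    [SMul Γ B] [TopologicalSpace B] [Norm B] : Set (X → B) :=
  {F | Continuous F ∧ (∀ (g : Γ) (x : X), F (g • x) = g • F x) ∧
    (∃ C : ℝ, ∀ x : X, ‖F x‖ ≤ C) ∧
    ∀ ε : ℝ, 0 < ε → ∃ K : Set (Quotient (MulAction.orbitRel Γ X)), IsCompact K ∧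
      ∀ x : X, Quotient.mk (MulAction.orbitRel Γ X) x ∉ K → ‖F x‖ < ε}


section Aux
variable {G B : Type*} [Group G]
    [NormedRing B] [StarRing B] [CStarRing B] [NormedAlgebra ℂ B]
    [StarModule ℂ B] [CompleteSpace B]
    [MulSemiringAction G B] [SMulCommClass G ℂ B]

private def myActEquiv (hstar : ∀ (g : G) (b : B), g • (star b) = star (g • b)) (g : G) :
    B ≃⋆ₐ[ℂ] B where
  toFun := (g • ·)
  invFun := (g⁻¹ • ·)
  left_inv := fun b => inv_smul_smul g b
  right_inv := fun b => smul_inv_smul g b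
  map_mul' := fun a b => smul_mul' g a b
  map_add' := fun a b => smul_add g a b
  map_smul' := fun c b => smul_comm g c b
  map_star' := fun b => hstar g b

private theorem my_norm_gsmul (hstar : ∀ (g : G) (b : B), g • (star b) = star (g • b))
    (g : G) (b : B) : ‖g • b‖ = ‖b‖ := by
  letI : CStarAlgebra B := {}
  exact StarAlgEquiv.norm_map (myActEquiv hstar g) b

private theorem my_joint_cont [TopologicalSpace G] (hstar : ∀ (g : G) (b : B), g • (star b) = star (g • b))
    (hcont : ∀ b : B, Continuous fun g : G => g • b)
    {Y : Type*} [TopologicalSpace Y] {f : Y → B} (hf : Continuous f) :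
    Continuous fun p : G × Y => p.1 • f p.2 := by
  rw [continuous_iff_continuousAt]
  rintro ⟨g₀, y₀⟩
  have h1 : Filter.Tendsto (fun p : G × Y => p.1 • (f p.2 - f y₀))
      (nhds (g₀, y₀)) (nhds 0) := by
    rw [tendsto_zero_iff_norm_tendsto_zero]
    have hkey : (fun p : G × Y => ‖p.1 • (f p.2 - f y₀)‖)
        = fun p : G × Y => ‖f p.2 - f y₀‖ :=
      funext fun p => my_norm_gsmul hstar p.1 _
    rw [hkey]
    have : Filter.Tendsto (fun p : G × Y => f p.2 - f y₀) (nhds (g₀, y₀))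
        (nhds (f y₀ - f y₀)) :=
      ((hf.comp continuous_snd).sub continuous_const).tendsto (g₀, y₀)
    simpa using this.norm
  have h2 : Filter.Tendsto (fun p : G × Y => p.1 • f y₀) (nhds (g₀, y₀))
      (nhds (g₀ • f y₀)) := ((hcont (f y₀)).comp continuous_fst).tendsto (g₀, y₀)
  have hkey : (fun p : G × Y => p.1 • f p.2)
      = fun p : G × Y => p.1 • (f p.2 - f y₀) + p.1 • f y₀ := by
    funext p
    rw [smul_sub, sub_add_cancel]
  rw [ContinuousAt, hkey]
  simpa using h1.add h2

end Aux

/-- Let `G` be a locally compact Hausdorff group, `H` a closed subgroup, `Y`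
a locally compact Hausdorff proper `H`-space, and `β` a strongly continuous
action of `G` by `*`-automorphisms on a C*-algebra `B`.  Then the map
`Φ : C₀((G ×_H Y) ×_G B) → C₀(Y ×_H B)` defined by `Φ(F)(y) = F([e, y])` is a
`*`-isomorphism (a bijection between the two generalized fixed-point
algebras; the operations are pointwise, so it is automatically a
`*`-homomorphism), with inverse given by `Φ⁻¹(F)([g, y]) = β_g (F y)`, i.e.
every `F ∈ C₀((G ×_H Y) ×_G B)` satisfies `F([g, y]) = β_g (F([e, y]))`. -/
theorem indAlg_iso_of_induced_space
    (G : Type*) [Group G] [TopologicalSpace G] [IsTopologicalGroup G]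
    [LocallyCompactSpace G] [T2Space G]
    (H : Subgroup G) (hH : IsClosed (H : Set G))
    (Y : Type*) [TopologicalSpace Y] [LocallyCompactSpace Y] [T2Space Y]
    [MulAction (↥H) Y] [ContinuousSMul (↥H) Y] (hYproper : ProperAction (↥H) Y)
    (B : Type*) [NormedRing B] [StarRing B] [CStarRing B] [NormedAlgebra ℂ B]
    [StarModule ℂ B] [CompleteSpace B]
    [MulSemiringAction G B] [SMulCommClass G ℂ B]
    (hstar : ∀ (g : G) (b : B), g • (star b) = star (g • b))
    (hcont : ∀ b : B, Continuous fun g : G => g • b) :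
    Set.BijOn
      (fun F : IndSpace G H Y → B =>
        fun y : Y => F (Quotient.mk (indSetoid G H Y) (1, y)))
      (IndAlg G (IndSpace G H Y) B) (IndAlg (↥H) Y B) ∧
    ∀ F ∈ IndAlg G (IndSpace G H Y) B, ∀ (g : G) (y : Y),
      F (Quotient.mk (indSetoid G H Y) (g, y))
        = g • F (Quotient.mk (indSetoid G H Y) (1, y)) := by
  have hnorm : ∀ (g : G) (b : B), ‖g • b‖ = ‖b‖ := my_norm_gsmul hstar
  have hsmulmk : ∀ (g : G) (p : G × Y), g • Quotient.mk (indSetoid G H Y) p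
      = Quotient.mk (indSetoid G H Y) (g * p.1, p.2) := fun g p => rfl
  have hmk : ∀ (g : G) (y : Y), Quotient.mk (indSetoid G H Y) (g, y)
      = g • Quotient.mk (indSetoid G H Y) (1, y) := by
    intro g y
    rw [hsmulmk, mul_one]
  have hre : ∀ (h : ↥H) (y : Y), Quotient.mk (indSetoid G H Y) (1, h • y)
      = (h : G) • Quotient.mk (indSetoid G H Y) (1, y) := by
    intro h y
    rw [hsmulmk, mul_one]
    refine Eq.symm (Quotient.sound ?_)
    exact ⟨h, by simp, rfl⟩
  have hequiv : ∀ F ∈ IndAlg G (IndSpace G H Y) B, ∀ (g : G) (y : Y),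
      F (Quotient.mk (indSetoid G H Y) (g, y))
        = g • F (Quotient.mk (indSetoid G H Y) (1, y)) := by
    intro F hF g y
    rw [hmk g y]
    exact hF.2.1 g _
  -- the orbit space maps
  have ψ0wd : ∀ p q : G × Y, (indSetoid G H Y).r p q →
      Quotient.mk (MulAction.orbitRel (↥H) Y) p.2
        = Quotient.mk (MulAction.orbitRel (↥H) Y) q.2 := by
    rintro p q ⟨h, -, h2⟩
    refine Eq.symm (Quotient.sound ?_)
    exact ⟨h, h2.symm⟩
  set ψ0 : IndSpace G H Y → Quotient (MulAction.orbitRel (↥H) Y) :=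
    Quotient.lift (fun p : G × Y => Quotient.mk (MulAction.orbitRel (↥H) Y) p.2) ψ0wd with hψ0
  have ψwd : ∀ a b : IndSpace G H Y, (MulAction.orbitRel G (IndSpace G H Y)).r a b →
      ψ0 a = ψ0 b := by
    intro a b hab
    obtain ⟨g, rfl⟩ : ∃ g : G, g • b = a := hab
    exact Quotient.inductionOn b fun p => rfl
  set ψbar : Quotient (MulAction.orbitRel G (IndSpace G H Y)) →
      Quotient (MulAction.orbitRel (↥H) Y) := Quotient.lift ψ0 ψwd with hψbar
  have hψcont : Continuous ψbar := by
    refine Continuous.quotient_lift ?_ ψwd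
    exact Continuous.quotient_lift (continuous_quotient_mk'.comp continuous_snd) ψ0wd
  have φwd : ∀ a b : Y, (MulAction.orbitRel (↥H) Y).r a b →
      Quotient.mk (MulAction.orbitRel G (IndSpace G H Y))
          (Quotient.mk (indSetoid G H Y) (1, a))
        = Quotient.mk (MulAction.orbitRel G (IndSpace G H Y))
          (Quotient.mk (indSetoid G H Y) (1, b)) := by
    intro a b hab
    obtain ⟨h, rfl⟩ : ∃ h : ↥H, h • b = a := hab
    exact Quotient.sound ⟨(h : G), (hre h b).symm⟩
  set φbar : Quotient (MulAction.orbitRel (↥H) Y) →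
      Quotient (MulAction.orbitRel G (IndSpace G H Y)) :=
    Quotient.lift (fun y : Y => Quotient.mk (MulAction.orbitRel G (IndSpace G H Y))
      (Quotient.mk (indSetoid G H Y) (1, y))) φwd with hφbar
  have hφcont : Continuous φbar := by
    refine Continuous.quotient_lift ?_ φwd
    exact continuous_quotient_mk'.comp (continuous_quotient_mk'.comp (Continuous.prodMk_right 1))
  -- maps to
  have hmaps : Set.MapsTo
      (fun F : IndSpace G H Y → B =>
        fun y : Y => F (Quotient.mk (indSetoid G H Y) (1, y)))
      (IndAlg G (IndSpace G H Y) B) (IndAlg (↥H) Y B) := by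
    rintro F ⟨hc, heq, ⟨C, hC⟩, hvan⟩
    refine ⟨?_, ?_, ⟨C, fun y => hC _⟩, ?_⟩
    · exact hc.comp (continuous_quotient_mk'.comp (Continuous.prodMk_right 1))
    · intro h y
      show F (Quotient.mk (indSetoid G H Y) (1, h • y)) = h • F (Quotient.mk _ (1, y))
      rw [hre h y, heq]
      rfl
    · intro ε hε
      obtain ⟨K, hK, hKp⟩ := hvan ε hε
      refine ⟨ψbar '' K, hK.image hψcont, ?_⟩
      intro y hy
      refine hKp _ fun hmem => hy ?_
      exact ⟨_, hmem, rfl⟩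
  have hinj : Set.InjOn
      (fun F : IndSpace G H Y → B =>
        fun y : Y => F (Quotient.mk (indSetoid G H Y) (1, y)))
      (IndAlg G (IndSpace G H Y) B) := by
    intro F hF F' hF' hEq
    funext x
    obtain ⟨⟨g, y⟩, rfl⟩ := Quotient.exists_rep x
    rw [hequiv F hF g y, hequiv F' hF' g y]
    exact congrArg (fun b => g • b) (congrFun hEq y)
  have hsurj : Set.SurjOn
      (fun F : IndSpace G H Y → B =>
        fun y : Y => F (Quotient.mk (indSetoid G H Y) (1, y)))
      (IndAlg G (IndSpace G H Y) B) (IndAlg (↥H) Y B) := by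
    rintro f ⟨fc, feq, ⟨C, fC⟩, fvan⟩
    have Fwd : ∀ p q : G × Y, (indSetoid G H Y).r p q → p.1 • f p.2 = q.1 • f q.2 := by
      rintro ⟨g, y⟩ ⟨g', y'⟩ ⟨h, h1, h2⟩
      dsimp only at h1 h2 ⊢
      subst h1; subst h2
      rw [feq h y]
      show g • f y = (g * (h : G)⁻¹) • ((h : G) • f y)
      rw [← mul_smul, inv_mul_cancel_right]
    refine ⟨Quotient.lift (fun p : G × Y => p.1 • f p.2) Fwd, ⟨?_, ?_, ⟨C, ?_⟩, ?_⟩, ?_⟩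
    · exact (my_joint_cont hstar hcont fc).quotient_lift Fwd
    · intro g x
      obtain ⟨p, rfl⟩ := Quotient.exists_rep x
      show (g * p.1) • f p.2 = g • (p.1 • f p.2)
      rw [mul_smul]
    · intro x
      obtain ⟨p, rfl⟩ := Quotient.exists_rep x
      show ‖p.1 • f p.2‖ ≤ C
      rw [hnorm]
      exact fC p.2
    · intro ε hε
      obtain ⟨K, hK, hKp⟩ := fvan ε hε
      refine ⟨φbar '' K, hK.image hφcont, ?_⟩
      intro x hx
      obtain ⟨p, rfl⟩ := Quotient.exists_rep x
      show ‖p.1 • f p.2‖ < ε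
      rw [hnorm]
      refine hKp p.2 fun hmem => hx ⟨_, hmem, ?_⟩
      show Quotient.mk (MulAction.orbitRel G (IndSpace G H Y))
          (Quotient.mk (indSetoid G H Y) (1, p.2))
        = Quotient.mk (MulAction.orbitRel G (IndSpace G H Y))
          (Quotient.mk (indSetoid G H Y) p)
      refine Quotient.sound ⟨p.1⁻¹, ?_⟩
      show p.1⁻¹ • Quotient.mk (indSetoid G H Y) p = Quotient.mk (indSetoid G H Y) (1, p.2)
      rw [hsmulmk]
      simp
    · funext y
      show (1 : G) • f y = f y
      exact one_smul G (f y)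
  exact ⟨⟨hmaps, hinj, hsurj⟩, hequiv⟩
end
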